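/- Let X₀ be an N-dimensional standard Student-t random vector with ν > 2 degrees of freedom, i.e., density ST(x | 0, I, ν) = [Γ((ν+N)/2)] / [Γ(ν/2) ((ν−2)π)^{N/2}] · (1 + xᵀx/(ν−2))^{−(ν+N)/2}. Then E[log(1 + X₀ᵀX₀/(ν−2))] = Ψ((ν+N)/2) − Ψ(ν/2), where Ψ is the digamma function. -/

import Mathlib

open Real MeasureTheory Matrix Filter Topology

/-- The multivariate Student-t density (covariance parameterization, `ν > 2`). -/
noncomputable def stPdf {ι : Type*} [Fintype ι] [DecidableEq ι] (ν : ℝ) (φ : ι → ℝ)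
    (K : Matrix ι ι ℝ) (y : ι → ℝ) : ℝ :=
  (Real.Gamma ((ν + Fintype.card ι) / 2) * K.det ^ (-(1 : ℝ) / 2)) /
      (Real.Gamma (ν / 2) * ((ν - 2) * Real.pi) ^ ((Fintype.card ι : ℝ) / 2)) *
    (1 + (y - φ) ⬝ᵥ (K⁻¹ *ᵥ (y - φ)) / (ν - 2)) ^ (-(ν + Fintype.card ι) / 2)

/-- The multivariate Gaussian density `N(y | μ, Σ)`. -/
noncomputable def gaussPdf {ι : Type*} [Fintype ι] [DecidableEq ι] (μ : ι → ℝ)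
    (Cov : Matrix ι ι ℝ) (y : ι → ℝ) : ℝ :=
  (2 * Real.pi) ^ (-(Fintype.card ι : ℝ) / 2) * Cov.det ^ (-(1 : ℝ) / 2) *
    Real.exp (-((y - μ) ⬝ᵥ (Cov⁻¹ *ᵥ (y - μ))) / 2)

/-- Density of `r` when `r⁻¹ ~ Gamma(a, b)` (shape `a`, rate `b`). -/
noncomputable def invGammaPdf (a b r : ℝ) : ℝ :=
  b ^ a / Real.Gamma a * r ^ (-a - 1) * Real.exp (-b / r)

/-- The digamma function `Ψ = (log ∘ Γ)'`. -/
noncomputable def digamma (x : ℝ) : ℝ := deriv (fun t => Real.log (Real.Gamma t)) x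


open Set in
/-- Real Beta integral. -/
lemma real_beta {a b : ℝ} (ha : 0 < a) (hb : 0 < b) :
    ∫ t in Ioo (0:ℝ) 1, t ^ (a-1) * (1-t) ^ (b-1) =
      Real.Gamma a * Real.Gamma b / Real.Gamma (a+b) := by
  have hab : Real.Gamma (a+b) ≠ 0 := (Real.Gamma_pos_of_pos (by linarith)).ne'
  have h := Complex.Gamma_mul_Gamma_eq_betaIntegral (s := (a:ℂ)) (t := (b:ℂ))
    (by simpa using ha) (by simpa using hb)
  have hbeta : Complex.betaIntegral a b =
      ((∫ t in Ioo (0:ℝ) 1, t ^ (a-1) * (1-t) ^ (b-1) : ℝ) : ℂ) := by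
    rw [Complex.betaIntegral, intervalIntegral.integral_of_le zero_le_one,
      MeasureTheory.integral_Ioc_eq_integral_Ioo]
    have step : (∫ x in Ioo (0:ℝ) 1, (x:ℂ) ^ ((a:ℂ)-1) * (1-(x:ℂ)) ^ ((b:ℂ)-1)) =
        ∫ x in Ioo (0:ℝ) 1, ((x ^ (a-1) * (1-x) ^ (b-1) : ℝ) : ℂ) := by
      refine setIntegral_congr_fun measurableSet_Ioo fun x hx => ?_
      have hx0 : (0:ℝ) ≤ x := le_of_lt hx.1
      have hx1 : (0:ℝ) ≤ 1 - x := by linarith [hx.2.le]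
      rw [Complex.ofReal_mul, Complex.ofReal_cpow hx0, Complex.ofReal_cpow hx1]
      push_cast
      ring
    rw [step]
    exact integral_ofReal
  rw [hbeta] at h
  have h3 : Real.Gamma a * Real.Gamma b =
      Real.Gamma (a+b) * ∫ t in Ioo (0:ℝ) 1, t ^ (a-1) * (1-t) ^ (b-1) := by
    have hc : ((a:ℂ) + b) = ((a + b : ℝ) : ℂ) := by push_cast; ring
    rw [hc, Complex.Gamma_ofReal, Complex.Gamma_ofReal, Complex.Gamma_ofReal] at h
    exact_mod_cast h
  field_simp
  linarith [h3]

open Set in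
lemma oneDim {N : ℕ} (hN : N ≠ 0) {a p : ℝ} (ha : 0 < a) (hp : (N:ℝ)/2 < p) :
    ∫ r in Ioi (0:ℝ), r ^ (N-1) * (1 + r^2/a) ^ (-p) =
      a ^ ((N:ℝ)/2) * (Real.Gamma ((N:ℝ)/2) * Real.Gamma (p - (N:ℝ)/2) /
        Real.Gamma p) / 2 := by
  have hN1 : 1 ≤ N := Nat.one_le_iff_ne_zero.mpr hN
  set n2 : ℝ := (N:ℝ)/2 with hn2_def
  have hn2 : 0 < n2 := by positivity
  have hpn : 0 < p - n2 := by simpa [hn2_def] using hp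
  set f : ℝ → ℝ := fun r => r^2/(a+r^2) with hf_def
  set f' : ℝ → ℝ := fun r => 2*a*r/(a+r^2)^2 with hf'_def
  set g : ℝ → ℝ := fun t => t^(n2-1) * (1-t)^(p-n2-1) with hg_def
  have hspos : ∀ r : ℝ, 0 < a + r^2 := fun r => by positivity
  have himg : f '' Ioi 0 = Ioo 0 1 := by
    ext t
    constructor
    · rintro ⟨r, hr, rfl⟩
      have hr' : (0:ℝ) < r := hr
      exact ⟨by simp only [hf_def]; positivity,
        by simp only [hf_def]; rw [div_lt_one (hspos r)]; nlinarith⟩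
    · rintro ⟨ht0, ht1⟩
      have h1t : 0 < 1 - t := by linarith
      refine ⟨Real.sqrt (a*t/(1-t)), Real.sqrt_pos.mpr (div_pos (mul_pos ha ht0) h1t), ?_⟩
      have hz : (0:ℝ) ≤ a*t/(1-t) := by positivity
      simp only [hf_def, Real.sq_sqrt hz]
      field_simp
      ring
  have hinj : InjOn f (Ioi 0) := by
    intro r1 h1 r2 h2 heq
    simp only [hf_def] at heq
    have h1' : (0:ℝ) < r1 := h1
    have h2' : (0:ℝ) < r2 := h2
    have e1 : r1^2 * (a + r2^2) = r2^2 * (a + r1^2) := by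
      field_simp [ne_of_gt (hspos r1), ne_of_gt (hspos r2)] at heq
      linarith [heq]
    have : r1^2 = r2^2 := by nlinarith
    nlinarith
  have hderiv : ∀ r ∈ Ioi (0:ℝ), HasDerivWithinAt f (f' r) (Ioi 0) r := by
    intro r hr
    have hd : HasDerivAt f (f' r) r := by
      have h1 : HasDerivAt (fun r : ℝ => r^2) (2*r) r := by
        simpa using hasDerivAt_pow 2 r
      have h2 : HasDerivAt (fun r : ℝ => a + r^2) (2*r) r := by
        simpa using h1.const_add a
      have := h1.div h2 (ne_of_gt (hspos r))
      exact this.congr_deriv (by simp only [hf'_def]; ring)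
    exact hd.hasDerivWithinAt
  have key := integral_image_eq_integral_abs_deriv_smul measurableSet_Ioi hderiv hinj g
  rw [himg] at key
  have hbv : ∫ t in Ioo (0:ℝ) 1, g t =
      Real.Gamma n2 * Real.Gamma (p - n2) / Real.Gamma p := by
    have h := real_beta hn2 hpn
    rw [show n2 + (p - n2) = p by ring] at h
    simpa [hg_def] using h
  have hpt : ∀ r ∈ Ioi (0:ℝ), |f' r| • g (f r) =
      (2*a^(-n2)) * (r ^ (N-1) * (1 + r^2/a)^(-p)) := by
    intro r hr
    have hr' : (0:ℝ) < r := hr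
    have hs : 0 < a + r^2 := hspos r
    have h1t : 1 - r^2/(a+r^2) = a / (a + r^2) := by
      field_simp
      ring
    have h2n : 1 + r^2/a = (a + r^2)/a := by field_simp
    have hBn : (r:ℝ) ^ (N-1) = r ^ (2*n2-1) := by
      rw [← Real.rpow_natCast r (N-1)]
      congr 1
      rw [Nat.cast_sub hN1, Nat.cast_one, hn2_def]
      ring
    rw [smul_eq_mul]
    simp only [hg_def, hf_def, hf'_def]
    rw [h1t, h2n, hBn]
    set s := a + r^2 with hs_def
    have e1 : (r^2/s)^(n2-1) = r ^ (2*n2-2) * s ^ (-(n2-1)) := by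
      rw [Real.div_rpow (by positivity) hs.le, Real.rpow_neg hs.le, ← div_eq_mul_inv]
      congr 1
      rw [← Real.rpow_natCast r 2, ← Real.rpow_mul hr'.le]
      norm_num
      ring_nf
    have e2 : (a/s)^(p-n2-1) = a ^ (p-n2-1) * s ^ (-(p-n2-1)) := by
      rw [Real.div_rpow ha.le hs.le, Real.rpow_neg hs.le, div_eq_mul_inv]
    have e3 : (s/a)^(-p) = s ^ (-p) * a ^ p := by
      rw [Real.div_rpow hs.le ha.le, Real.rpow_neg ha.le, div_eq_mul_inv, inv_inv]
    have e4 : 2*a*r/s^2 = 2*a*r*s^(-(2:ℝ)) := by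
      rw [Real.rpow_neg hs.le, Real.rpow_two, ← div_eq_mul_inv]
    rw [abs_of_pos (by positivity), e1, e2, e3, e4]
    calc 2*a*r*s^(-(2:ℝ)) * (r ^ (2*n2-2) * s ^ (-(n2-1)) * (a ^ (p-n2-1) * s ^ (-(p-n2-1))))
        = 2 * (a^(1:ℝ) * a^(p-n2-1)) * (r^(1:ℝ) * r^(2*n2-2)) *
          (s^(-(2:ℝ)) * s^(-(n2-1)) * s^(-(p-n2-1))) := by
          rw [Real.rpow_one, Real.rpow_one]; ring
      _ = 2 * a^(p-n2) * r^(2*n2-1) * s^(-p) := by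
          rw [← Real.rpow_add ha, ← Real.rpow_add hr', ← Real.rpow_add hs, ← Real.rpow_add hs]
          norm_num
          ring_nf
      _ = 2*a^(-n2) * (r ^ (2*n2-1) * (s ^ (-p) * a ^ p)) := by
          rw [show (p - n2 : ℝ) = -n2 + p by ring, Real.rpow_add ha]
          ring
  have hIoi : (∫ r in Ioi (0:ℝ), |f' r| • g (f r)) =
      (2*a^(-n2)) * ∫ r in Ioi (0:ℝ), r ^ (N-1) * (1 + r^2/a)^(-p) := by
    rw [setIntegral_congr_fun measurableSet_Ioi hpt]
    exact integral_const_mul _ _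
  rw [hbv, hIoi] at key
  have hane : a ^ n2 ≠ 0 := (Real.rpow_pos_of_pos ha _).ne'
  rw [Real.rpow_neg ha.le] at key
  have hGp : Real.Gamma p ≠ 0 := (Real.Gamma_pos_of_pos (by linarith)).ne'
  rw [hn2_def] at key hane ⊢
  field_simp at key ⊢
  linarith [key]

open Set in
lemma dot_self_nonneg' {N : ℕ} (x : Fin N → ℝ) : 0 ≤ x ⬝ᵥ x :=
  Finset.sum_nonneg fun i _ => mul_self_nonneg _

lemma continuous_dot_self {N : ℕ} : Continuous (fun x : Fin N → ℝ => x ⬝ᵥ x) := by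
  simp only [dotProduct]
  exact continuous_finset_sum _ fun i _ => (continuous_apply i).mul (continuous_apply i)

lemma continuous_st {N : ℕ} {a : ℝ} (ha : 0 < a) (s : ℝ) :
    Continuous (fun x : Fin N → ℝ => (1 + x ⬝ᵥ x / a) ^ (-s)) := by
  refine Continuous.rpow_const (continuous_const.add (continuous_dot_self.div_const a))
    fun x => Or.inl ?_
  have := dot_self_nonneg' x
  positivity

lemma integrable_st {N : ℕ} {a s : ℝ} (ha : 0 < a) (hs : (N:ℝ)/2 < s) :
    Integrable (fun x : Fin N → ℝ => (1 + x ⬝ᵥ x / a) ^ (-s)) := by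
  set m : ℝ := min 1 a⁻¹ with hm_def
  have hm : 0 < m := lt_min one_pos (inv_pos.mpr ha)
  have hfr : (Module.finrank ℝ (Fin N → ℝ) : ℝ) < 2*s := by
    rw [Module.finrank_pi, Fintype.card_fin]
    linarith
  have base := (integrable_rpow_neg_one_add_norm_sq (E := (Fin N → ℝ))
    (μ := volume) hfr).const_mul (m^(-s))
  refine base.mono' (continuous_st ha s).aestronglyMeasurable (ae_of_all _ fun x => ?_)
  have hq := dot_self_nonneg' x
  have hnx : ‖x‖^2 ≤ x ⬝ᵥ x := by
    have hle : ‖x‖ ≤ Real.sqrt (x ⬝ᵥ x) := by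
      refine (pi_norm_le_iff_of_nonneg (Real.sqrt_nonneg _)).mpr fun i => ?_
      rw [Real.norm_eq_abs, ← Real.sqrt_sq_eq_abs]
      refine Real.sqrt_le_sqrt ?_
      have : x i ^ 2 = x i * x i := sq (x i) ▸ by ring
      rw [this]
      exact Finset.single_le_sum (fun j _ => mul_self_nonneg (x j)) (Finset.mem_univ i)
    calc ‖x‖^2 ≤ Real.sqrt (x ⬝ᵥ x) ^ 2 := by
          exact pow_le_pow_left₀ (norm_nonneg x) hle 2
      _ = x ⬝ᵥ x := Real.sq_sqrt hq
  have hchain : m * (1 + ‖x‖^2) ≤ 1 + x ⬝ᵥ x / a := by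
    have h1 : m ≤ 1 := min_le_left _ _
    have h2 : m * ‖x‖^2 ≤ x ⬝ᵥ x / a := by
      calc m * ‖x‖^2 ≤ a⁻¹ * ‖x‖^2 :=
            mul_le_mul_of_nonneg_right (min_le_right _ _) (sq_nonneg _)
        _ ≤ a⁻¹ * (x ⬝ᵥ x) := mul_le_mul_of_nonneg_left hnx (inv_pos.mpr ha).le
        _ = x ⬝ᵥ x / a := by rw [div_eq_inv_mul]
    calc m * (1 + ‖x‖^2) = m + m * ‖x‖^2 := by ring
      _ ≤ 1 + x ⬝ᵥ x / a := add_le_add h1 h2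
  have hub : (1 + x ⬝ᵥ x / a) ^ (-s) ≤ m^(-s) * (1+‖x‖^2)^(-(2*s)/2) := by
    have hmpos : 0 < m * (1 + ‖x‖^2) := by positivity
    have := Real.rpow_le_rpow_of_nonpos hmpos hchain (by linarith [hs, (Nat.cast_nonneg N : (0:ℝ) ≤ N)] : -s ≤ 0)
    calc (1 + x ⬝ᵥ x / a) ^ (-s) ≤ (m * (1 + ‖x‖^2)) ^ (-s) := this
      _ = m^(-s) * (1+‖x‖^2)^(-s) := Real.mul_rpow hm.le (by positivity)
      _ = m^(-s) * (1+‖x‖^2)^(-(2*s)/2) := by rw [show -(2*s)/2 = -s by ring]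
  rw [Real.norm_eq_abs, abs_of_nonneg (Real.rpow_nonneg (by positivity) _)]
  exact hub

open Set in
lemma mv_value {N : ℕ} (hN : N ≠ 0) {a p : ℝ} (ha : 0 < a) (hp : (N:ℝ)/2 < p) :
    ∫ x : Fin N → ℝ, (1 + x ⬝ᵥ x / a) ^ (-p) =
      (a*π) ^ ((N:ℝ)/2) * Real.Gamma (p - (N:ℝ)/2) / Real.Gamma p := by
  haveI : Nonempty (Fin N) := ⟨⟨0, Nat.pos_of_ne_zero hN⟩⟩
  have hn2 : (0:ℝ) < (N:ℝ)/2 := by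
    have : 0 < N := Nat.pos_of_ne_zero hN
    positivity
  set e := (MeasurableEquiv.toLp 2 (Fin N → ℝ)).symm with he_def
  have htrans := (EuclideanSpace.volume_preserving_symm_measurableEquiv_toLp (Fin N)).integral_comp
    e.measurableEmbedding (fun x : Fin N → ℝ => (1 + x ⬝ᵥ x / a) ^ (-p))
  have hdotnorm : ∀ y : EuclideanSpace ℝ (Fin N), (e y) ⬝ᵥ (e y) = ‖y‖^2 := by
    intro y
    rw [EuclideanSpace.norm_eq, Real.sq_sqrt (by positivity)]
    simp only [dotProduct, he_def, MeasurableEquiv.coe_toLp_symm,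
      Real.norm_eq_abs, sq_abs]
    exact Finset.sum_congr rfl fun i _ => (sq (y i)).symm ▸ by ring
  rw [← htrans]
  have hfun : (fun y : EuclideanSpace ℝ (Fin N) => (1 + (e y) ⬝ᵥ (e y) / a) ^ (-p)) =
      fun y => (fun r : ℝ => (1 + r^2/a) ^ (-p)) ‖y‖ := by
    funext y
    simp only [hdotnorm y]
  rw [hfun, MeasureTheory.integral_fun_norm_addHaar volume (fun r : ℝ => (1 + r^2/a) ^ (-p))]
  rw [finrank_euclideanSpace, Fintype.card_fin]
  rw [measureReal_def, EuclideanSpace.volume_ball, Fintype.card_fin]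
  simp only [ENNReal.ofReal_one, one_pow, one_mul,
    ENNReal.toReal_ofReal (by positivity : (0:ℝ) ≤ Real.sqrt π ^ N / Real.Gamma ((N:ℝ)/2+1))]
  simp only [smul_eq_mul, nsmul_eq_mul]
  rw [oneDim hN ha hp]
  have hsqrtpi : Real.sqrt π ^ N = π ^ ((N:ℝ)/2) := by
    rw [Real.sqrt_eq_rpow, ← Real.rpow_natCast (π ^ ((1:ℝ)/2)) N, ← Real.rpow_mul pi_pos.le]
    congr 1
    ring
  have hgadd : Real.Gamma ((N:ℝ)/2+1) = (N:ℝ)/2 * Real.Gamma ((N:ℝ)/2) :=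
    Real.Gamma_add_one hn2.ne'
  have hmul : (a*π) ^ ((N:ℝ)/2) = a ^ ((N:ℝ)/2) * π ^ ((N:ℝ)/2) :=
    Real.mul_rpow ha.le pi_pos.le
  have hG1 : Real.Gamma ((N:ℝ)/2) ≠ 0 := (Real.Gamma_pos_of_pos hn2).ne'
  have hGp : Real.Gamma p ≠ 0 := (Real.Gamma_pos_of_pos (by linarith)).ne'
  have hNne : (N:ℝ) ≠ 0 := Nat.cast_ne_zero.mpr hN
  rw [hsqrtpi, hgadd, hmul]
  field_simp

open Set in
lemma digamma_eq_of_pos {x : ℝ} (hx : 0 < x) :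
    digamma x = deriv Real.Gamma x / Real.Gamma x := by
  have hd : DifferentiableAt ℝ Real.Gamma x :=
    Real.differentiableAt_Gamma fun m =>
      ne_of_gt (lt_of_le_of_lt (neg_nonpos.mpr (Nat.cast_nonneg m)) hx)
  have hne : Real.Gamma x ≠ 0 := (Real.Gamma_pos_of_pos hx).ne'
  have hlog : HasDerivAt (fun t => Real.log (Real.Gamma t))
      ((Real.Gamma x)⁻¹ * deriv Real.Gamma x) x :=
    (Real.hasDerivAt_log hne).comp x hd.hasDerivAt
  show deriv (fun t => Real.log (Real.Gamma t)) x = _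
  rw [hlog.deriv, div_eq_inv_mul]

/-- for an `N`-dimensional standard Student-t vector `X₀` with
`ν > 2` degrees of freedom, `E[log(1 + X₀ᵀX₀/(ν−2))] = Ψ((ν+N)/2) − Ψ(ν/2)`. -/
theorem standard_studentT_expected_log_quadratic {N : ℕ} (ν : ℝ) (hν : 2 < ν) :
    (∫ x : Fin N → ℝ,
        Real.log (1 + x ⬝ᵥ x / (ν - 2)) * stPdf ν 0 (1 : Matrix (Fin N) (Fin N) ℝ) x) =
      digamma ((ν + N) / 2) - digamma (ν / 2) := by
  rcases eq_or_ne N 0 with hN0 | hN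
  · subst hN0
    simp [dotProduct]
  have ha : (0:ℝ) < ν - 2 := by linarith
  have hNpos : (0:ℝ) < (N:ℝ) := by exact_mod_cast Nat.pos_of_ne_zero hN
  have hν2 : (0:ℝ) < ν/2 := by linarith
  set p₀ : ℝ := (ν + N)/2 with hp0
  have hpn : p₀ - (N:ℝ)/2 = ν/2 := by rw [hp0]; ring
  have hp0pos : (0:ℝ) < p₀ := by rw [hp0]; linarith
  have hp0gt : (N:ℝ)/2 < p₀ := by rw [hp0]; linarith
  set K : ℝ := ((ν-2)*π) ^ ((N:ℝ)/2) with hK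
  have hKpos : 0 < K := Real.rpow_pos_of_pos (by positivity) _
  have hGν2 : Real.Gamma (ν/2) ≠ 0 := (Real.Gamma_pos_of_pos hν2).ne'
  have hGp0 : Real.Gamma p₀ ≠ 0 := (Real.Gamma_pos_of_pos hp0pos).ne'
  -- rewrite the pdf
  have hstp : ∀ x : Fin N → ℝ, stPdf ν 0 (1 : Matrix (Fin N) (Fin N) ℝ) x =
      (Real.Gamma p₀ / (Real.Gamma (ν/2) * K)) * (1 + x ⬝ᵥ x/(ν-2)) ^ (-p₀) := by
    intro x
    simp only [stPdf, Matrix.det_one, inv_one, Matrix.one_mulVec, sub_zero, Real.one_rpow,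
      Fintype.card_fin, mul_one, hK, hp0]
    rw [neg_div]
  have hLHS : (∫ x : Fin N → ℝ,
      Real.log (1 + x ⬝ᵥ x / (ν - 2)) * stPdf ν 0 (1 : Matrix (Fin N) (Fin N) ℝ) x) =
      (Real.Gamma p₀ / (Real.Gamma (ν/2) * K)) *
        ∫ x : Fin N → ℝ, Real.log (1 + x ⬝ᵥ x / (ν - 2)) * (1 + x ⬝ᵥ x/(ν-2)) ^ (-p₀) := by
    rw [← integral_const_mul]
    congr 1
    funext x
    rw [hstp x]
    ring
  rw [hLHS]
  -- differentiation under the integral sign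
  set δ : ℝ := ν/8 with hδdef
  have hδ : 0 < δ := by rw [hδdef]; linarith
  have hbound_gt : (N:ℝ)/2 < p₀ - 2*δ := by
    rw [hp0, hδdef]; linarith
  have hcfact : ∀ x : Fin N → ℝ, 1 ≤ 1 + x ⬝ᵥ x/(ν-2) := fun x => by
    have := dot_self_nonneg' x
    have : 0 ≤ x ⬝ᵥ x / (ν-2) := div_nonneg this ha.le
    linarith
  have hcpos : ∀ x : Fin N → ℝ, (0:ℝ) < 1 + x ⬝ᵥ x/(ν-2) := fun x =>
    lt_of_lt_of_le one_pos (hcfact x)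
  have main := hasDerivAt_integral_of_dominated_loc_of_deriv_le (μ := volume)
    (F := fun p (x : Fin N → ℝ) => (1 + x ⬝ᵥ x/(ν-2)) ^ (-p))
    (F' := fun p (x : Fin N → ℝ) => -(Real.log (1 + x ⬝ᵥ x/(ν-2)) *
      (1 + x ⬝ᵥ x/(ν-2)) ^ (-p)))
    (x₀ := p₀) (s := Metric.ball p₀ δ)
    (bound := fun x : Fin N → ℝ => δ⁻¹ * (1 + x ⬝ᵥ x/(ν-2)) ^ (-(p₀ - 2*δ))) (Metric.ball_mem_nhds p₀ hδ)
    (Eventually.of_forall fun p => (continuous_st ha p).aestronglyMeasurable)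
    (integrable_st ha hp0gt)
    (by
      refine Continuous.aestronglyMeasurable ?_
      refine Continuous.neg (Continuous.mul ?_ (continuous_st ha p₀))
      refine Continuous.log (continuous_const.add (continuous_dot_self.div_const _))
        fun x => (hcpos x).ne')
    (ae_of_all _ fun x p hp => by
      set c : ℝ := 1 + x ⬝ᵥ x/(ν-2) with hc
      have hc1 : 1 ≤ c := hcfact x
      have hcp : 0 < c := hcpos x
      have hlognn : 0 ≤ Real.log c := Real.log_nonneg hc1
      rw [norm_neg, Real.norm_eq_abs,
        abs_of_nonneg (mul_nonneg hlognn (Real.rpow_nonneg hcp.le _))]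
      have hlog_le : Real.log c ≤ δ⁻¹ * c ^ δ := by
        have h1 : Real.log (c ^ δ) ≤ c ^ δ - 1 :=
          Real.log_le_sub_one_of_pos (Real.rpow_pos_of_pos hcp δ)
        have h2 : Real.log (c ^ δ) = δ * Real.log c := Real.log_rpow hcp δ
        have h3 : δ * Real.log c ≤ c ^ δ := by linarith
        calc Real.log c = δ⁻¹ * (δ * Real.log c) := by field_simp
          _ ≤ δ⁻¹ * c ^ δ := mul_le_mul_of_nonneg_left h3 (inv_nonneg.mpr hδ.le)
      have hexp_le : c ^ (-p) ≤ c ^ (δ - p₀) := by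
        refine Real.rpow_le_rpow_of_exponent_le hc1 ?_
        have := mem_ball_iff_norm.mp hp
        rw [Real.norm_eq_abs] at this
        have := abs_lt.mp this
        linarith [this.1]
      calc Real.log c * c ^ (-p) ≤ (δ⁻¹ * c ^ δ) * c ^ (δ - p₀) :=
            mul_le_mul hlog_le hexp_le (Real.rpow_nonneg hcp.le _)
              (by positivity)
        _ = δ⁻¹ * c ^ (-(p₀ - 2*δ)) := by
            rw [mul_assoc, ← Real.rpow_add hcp]
            congr 2
            ring)
    ((integrable_st ha hbound_gt).const_mul δ⁻¹)
    (ae_of_all _ fun x p hp => by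
      set c : ℝ := 1 + x ⬝ᵥ x/(ν-2) with hc
      have hcp : 0 < c := hcpos x
      have h := (Real.hasStrictDerivAt_const_rpow hcp (-p)).hasDerivAt
      have h2 := h.comp p (hasDerivAt_neg p)
      exact h2.congr_deriv (by ring))
  obtain ⟨hFint', hderiv⟩ := main
  -- identification of the derivative via the closed formula
  set G : ℝ → ℝ := fun p => K * (Real.Gamma (p - (N:ℝ)/2) / Real.Gamma p) with hG
  have hev : (fun p => ∫ x : Fin N → ℝ, (1 + x ⬝ᵥ x/(ν-2)) ^ (-p)) =ᶠ[𝓝 p₀] G := by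
    filter_upwards [Ioi_mem_nhds hp0gt] with p hp
    rw [mv_value hN ha hp, hG, hK, mul_div_assoc]
  have hdGν2 : DifferentiableAt ℝ Real.Gamma (ν/2) :=
    Real.differentiableAt_Gamma fun m =>
      ne_of_gt (lt_of_le_of_lt (neg_nonpos.mpr (Nat.cast_nonneg m)) hν2)
  have hdGp0 : DifferentiableAt ℝ Real.Gamma p₀ :=
    Real.differentiableAt_Gamma fun m =>
      ne_of_gt (lt_of_le_of_lt (neg_nonpos.mpr (Nat.cast_nonneg m)) hp0pos)
  have h1 : HasDerivAt (fun p => Real.Gamma (p - (N:ℝ)/2)) (deriv Real.Gamma (ν/2)) p₀ := by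
    have hout : HasDerivAt Real.Gamma (deriv Real.Gamma (ν/2)) (p₀ - (N:ℝ)/2) := by
      rw [hpn]; exact hdGν2.hasDerivAt
    have hin : HasDerivAt (fun p : ℝ => p - (N:ℝ)/2) 1 p₀ := by
      simpa using (hasDerivAt_id p₀).sub_const ((N:ℝ)/2)
    have h := hout.comp p₀ hin
    rw [mul_one] at h
    exact h
  have hdiv := h1.div hdGp0.hasDerivAt hGp0
  have hGderiv : HasDerivAt G (K * ((deriv Real.Gamma (ν/2) * Real.Gamma p₀ -
      Real.Gamma (p₀ - (N:ℝ)/2) * deriv Real.Gamma p₀) / Real.Gamma p₀ ^ 2)) p₀ :=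
    hdiv.const_mul K
  have hGd : HasDerivAt G (∫ x : Fin N → ℝ, -(Real.log (1 + x ⬝ᵥ x/(ν-2)) *
      (1 + x ⬝ᵥ x/(ν-2)) ^ (-p₀))) p₀ :=
    hderiv.congr_of_eventuallyEq hev.symm
  have heq := hGd.unique hGderiv
  rw [integral_neg] at heq
  have hT : (∫ x : Fin N → ℝ, Real.log (1 + x ⬝ᵥ x / (ν - 2)) *
      (1 + x ⬝ᵥ x/(ν-2)) ^ (-p₀)) =
      -(K * ((deriv Real.Gamma (ν/2) * Real.Gamma p₀ -
        Real.Gamma (ν/2) * deriv Real.Gamma p₀) / Real.Gamma p₀ ^ 2)) := by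
    rw [hpn] at heq
    linarith [heq]
  rw [hT, digamma_eq_of_pos hp0pos, digamma_eq_of_pos hν2]
  field_simp
  ring
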